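/- Let (A,B) be a NITA with no nontrivial basis elements of degree 1 or 2 and let b_3 ∈ B be non-real of degree 3 with b_3·b̄_3 = 1 + b_8. If (b_3·b_8, b_3·b_8) ≥ 4, then every basis element in the support of b_3·b_8 other than b_3 has degree strictly greater than 3, and (b_3·b_8, b_3·b_8) ∈ {4, 5}. -/
import Mathlib


/-- A normalized table algebra datum on a commutative `ℂ`-algebra `A`:
a distinguished basis `B` containing `1`, an involutive algebra
endomorphism `bar` permuting `B`, a bilinear form for which `B` is
orthonormal and which satisfies `(a, bc) = (a·b̄, c)`, nonnegative real
structure constants, and a degree homomorphism positive on `B`. -/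
structure TAData (A : Type) [CommRing A] [Algebra ℂ A] : Type where
  B : Finset A
  one_mem : (1 : A) ∈ B
  indep : LinearIndependent ℂ (fun b : {x : A // x ∈ B} => (b : A))
  span_top : Submodule.span ℂ (B : Set A) = ⊤
  bar : A →ₐ[ℂ] A
  bar_bar : ∀ a : A, bar (bar a) = a
  bar_mem : ∀ b ∈ B, bar b ∈ B
  ip : A →ₗ[ℂ] A →ₗ[ℂ] ℂ
  ip_symm : ∀ a b : A, ip a b = ip b a
  ip_self : ∀ b ∈ B, ip b b = 1
  ip_ne : ∀ b ∈ B, ∀ c ∈ B, b ≠ c → ip b c = 0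
  ip_assoc : ∀ a b c : A, ip a (b * c) = ip (a * bar b) c
  struct_nonneg : ∀ b ∈ B, ∀ c ∈ B, ∀ d ∈ B, ∃ r : ℝ, 0 ≤ r ∧ ip (b * c) d = (r : ℂ)
  deg : A →ₐ[ℂ] ℂ
  deg_pos : ∀ b ∈ B, ∃ r : ℝ, 0 < r ∧ deg b = (r : ℂ)

namespace TAData

variable {A : Type} [CommRing A] [Algebra ℂ A]

/-- Integrality (making a table algebra a NITA): all structure constants are
nonnegative integers and all degrees are positive integers. -/
def Integral (T : TAData A) : Prop :=
  (∀ b ∈ T.B, ∀ c ∈ T.B, ∀ d ∈ T.B, ∃ n : ℕ, T.ip (b * c) d = (n : ℂ)) ∧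
  (∀ b ∈ T.B, ∃ n : ℕ, 0 < n ∧ T.deg b = (n : ℂ))

/-- `L₁(B) = {1}` and `L₂(B) = ∅`: no nontrivial basis elements of degree 1 or 2. -/
def NoSmall (T : TAData A) : Prop :=
  (∀ b ∈ T.B, T.deg b = 1 → b = 1) ∧ (∀ b ∈ T.B, T.deg b ≠ 2)

/-- The table algebra is generated (as an algebra) by `b` (and its conjugate). -/
def GeneratedBy (T : TAData A) (b : A) : Prop :=
  Algebra.adjoin ℂ ({b, T.bar b} : Set A) = ⊤

/-- A table subset of `B`: contains `1`, closed under the involution and under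
supports of products. -/
def IsTableSubset (T : TAData A) (C : Set A) : Prop :=
  C ⊆ ↑T.B ∧ (1 : A) ∈ C ∧ (∀ b ∈ C, T.bar b ∈ C) ∧
    ∀ b ∈ C, ∀ c ∈ C, ∀ d ∈ T.B, T.ip (b * c) d ≠ 0 → d ∈ C

end TAData


namespace TAData

variable {A : Type} [CommRing A] [Algebra ℂ A]

lemma expand (T : TAData A) (a : A) : a = ∑ d ∈ T.B, T.ip a d • d := by
  have key : (∑ d ∈ T.B, (T.ip.flip d).smulRight d) = (LinearMap.id : A →ₗ[ℂ] A) := by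
    apply LinearMap.ext_on T.span_top
    intro b hb
    simp only [LinearMap.sum_apply, LinearMap.smulRight_apply, LinearMap.flip_apply,
      LinearMap.id_apply]
    rw [Finset.sum_eq_single b]
    · rw [T.ip_self b hb, one_smul]
    · intro d hd hne
      rw [T.ip_ne b hb d hd (Ne.symm hne), zero_smul]
    · intro h; exact absurd hb h
  have h2 := congrArg (fun f : A →ₗ[ℂ] A => f a) key
  simp only [LinearMap.sum_apply, LinearMap.smulRight_apply, LinearMap.flip_apply,
    LinearMap.id_apply] at h2
  exact h2.symm

lemma parseval (T : TAData A) (a c : A) :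
    T.ip a c = ∑ d ∈ T.B, T.ip a d * T.ip c d := by
  conv_lhs => rw [T.expand a]
  rw [map_sum, LinearMap.sum_apply]
  refine Finset.sum_congr rfl fun d _ => ?_
  rw [map_smul, LinearMap.smul_apply, smul_eq_mul, T.ip_symm d c]

lemma deg_sum (T : TAData A) (a : A) :
    T.deg a = ∑ d ∈ T.B, T.ip a d * T.deg d := by
  conv_lhs => rw [T.expand a]
  rw [map_sum]
  refine Finset.sum_congr rfl fun d _ => ?_
  rw [Algebra.smul_def, map_mul, AlgHom.commutes]
  rfl

end TAData

private lemma sum_sq_one {α : Type*} [DecidableEq α] {s : Finset α} {u : α → ℕ}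
    (h : ∑ d ∈ s, u d * u d = 1) :
    ∃ x ∈ s, u x = 1 ∧ ∀ d ∈ s, d ≠ x → u d = 0 := by
  have h0 : ∃ x ∈ s, u x ≠ 0 := by
    by_contra hc; push_neg at hc
    rw [Finset.sum_eq_zero (fun d hd => by rw [hc d hd]; ring)] at h; omega
  obtain ⟨x, hx, hux⟩ := h0
  have hle : u x * u x ≤ 1 :=
    h ▸ Finset.single_le_sum (f := fun d => u d * u d) (fun d _ => Nat.zero_le _) hx
  have hux1 : u x = 1 := by
    by_contra hne
    have h2 : 2 ≤ u x := by omega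
    have : 2 * 2 ≤ u x * u x := Nat.mul_le_mul h2 h2
    omega
  refine ⟨x, hx, hux1, fun d hd hdx => ?_⟩
  have hsplit := Finset.add_sum_erase s (fun d => u d * u d) hx
  have hz : ∑ d ∈ s.erase x, u d * u d = 0 := by
    simp only [hux1] at hsplit; omega
  have := (Finset.sum_eq_zero_iff).mp hz d (Finset.mem_erase.mpr ⟨hdx, hd⟩)
  simpa using this

private lemma sum_sq_two {α : Type*} [DecidableEq α] {s : Finset α} {u : α → ℕ}
    (h : ∑ d ∈ s, u d * u d = 2) :
    ∃ x ∈ s, ∃ y ∈ s, x ≠ y ∧ u x = 1 ∧ u y = 1 ∧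
      ∀ d ∈ s, d ≠ x → d ≠ y → u d = 0 := by
  have h0 : ∃ x ∈ s, u x ≠ 0 := by
    by_contra hc; push_neg at hc
    rw [Finset.sum_eq_zero (fun d hd => by rw [hc d hd]; ring)] at h; omega
  obtain ⟨x, hx, hux⟩ := h0
  have hle : u x * u x ≤ 2 :=
    h ▸ Finset.single_le_sum (f := fun d => u d * u d) (fun d _ => Nat.zero_le _) hx
  have hux1 : u x = 1 := by
    by_contra hne
    have h2 : 2 ≤ u x := by omega
    have : 2 * 2 ≤ u x * u x := Nat.mul_le_mul h2 h2
    omega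
  have hsplit := Finset.add_sum_erase s (fun d => u d * u d) hx
  have h1 : ∑ d ∈ s.erase x, u d * u d = 1 := by
    simp only [hux1] at hsplit; omega
  obtain ⟨y, hy, huy, hrest⟩ := sum_sq_one h1
  have hyx : y ≠ x := (Finset.mem_erase.mp hy).1
  refine ⟨x, hx, y, (Finset.mem_erase.mp hy).2, hyx.symm, hux1, huy, ?_⟩
  intro d hd hdx hdy
  exact hrest d (Finset.mem_erase.mpr ⟨hdx, hd⟩) hdy

private lemma sum_ind1 {α : Type*} [DecidableEq α] {s : Finset α} {u : α → ℕ} {x : α}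
    (hx : x ∈ s) (hux : u x = 1) (h0 : ∀ d ∈ s, d ≠ x → u d = 0) (g : α → ℕ) :
    ∑ d ∈ s, u d * g d = g x := by
  rw [← Finset.add_sum_erase s (fun d => u d * g d) hx, hux, one_mul,
    Finset.sum_eq_zero, add_zero]
  intro d hd
  rw [h0 d (Finset.mem_erase.mp hd).2 (Finset.mem_erase.mp hd).1, zero_mul]

private lemma sum_ind2 {α : Type*} [DecidableEq α] {s : Finset α} {u : α → ℕ} {x y : α}
    (hx : x ∈ s) (hy : y ∈ s) (hxy : x ≠ y) (hux : u x = 1) (huy : u y = 1)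
    (h0 : ∀ d ∈ s, d ≠ x → d ≠ y → u d = 0) (g : α → ℕ) :
    ∑ d ∈ s, u d * g d = g x + g y := by
  rw [← Finset.add_sum_erase s (fun d => u d * g d) hx, hux, one_mul]
  have hy' : y ∈ s.erase x := Finset.mem_erase.mpr ⟨hxy.symm, hy⟩
  rw [← Finset.add_sum_erase _ (fun d => u d * g d) hy', huy, one_mul,
    Finset.sum_eq_zero, add_zero]
  intro d hd
  have h1 := Finset.mem_erase.mp hd
  have h2 := Finset.mem_erase.mp h1.2
  rw [h0 d h2.2 h2.1 h1.1, zero_mul]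

/-- Lemma 4.2: if `(b₃b₈, b₃b₈) ≥ 4` then every constituent of
`b₃b₈` other than `b₃` has degree `> 3`, and `(b₃b₈, b₃b₈) ∈ {4, 5}`. -/
theorem stmt_6 {A : Type} [CommRing A] [Algebra ℂ A] (T : TAData A)
    (hInt : T.Integral) (hSmall : T.NoSmall)
    (b3 b8 : A)
    (hb3 : b3 ∈ T.B) (hd3 : T.deg b3 = 3) (hnr : T.bar b3 ≠ b3)
    (hb8 : b8 ∈ T.B) (hd8 : T.deg b8 = 8)
    (hmul : b3 * T.bar b3 = 1 + b8)
    (hip : ∃ k : ℕ, T.ip (b3 * b8) (b3 * b8) = (k : ℂ) ∧ 4 ≤ k) :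
    (∀ d ∈ T.B, T.ip (b3 * b8) d ≠ 0 → d ≠ b3 →
      ∃ m : ℕ, T.deg d = (m : ℂ) ∧ 3 < m) ∧
    (T.ip (b3 * b8) (b3 * b8) = 4 ∨ T.ip (b3 * b8) (b3 * b8) = 5) := by
  classical
  obtain ⟨hSC, hDeg⟩ := hInt
  obtain ⟨hL1, hL2⟩ := hSmall
  -- natural-valued degree function
  obtain ⟨D, hD⟩ : ∃ D : A → ℕ, ∀ d ∈ T.B, 0 < D d ∧ T.deg d = (D d : ℂ) := by
    refine ⟨fun d => if hd : d ∈ T.B then (hDeg d hd).choose else 0, fun d hd => ?_⟩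
    simp only [dif_pos hd]
    exact ⟨(hDeg d hd).choose_spec.1, (hDeg d hd).choose_spec.2⟩
  -- natural-valued coefficient functions for products of basis elements
  have coeffs : ∀ b ∈ T.B, ∀ c ∈ T.B, ∃ f : A → ℕ,
      ∀ d ∈ T.B, T.ip (b * c) d = (f d : ℂ) := by
    intro b hb c hc
    refine ⟨fun d => if hd : d ∈ T.B then (hSC b hb c hc d hd).choose else 0, fun d hd => ?_⟩
    simp only [dif_pos hd]
    exact (hSC b hb c hc d hd).choose_spec
  have hb3b : T.bar b3 ∈ T.B := T.bar_mem b3 hb3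
  have h1B : (1:A) ∈ T.B := T.one_mem
  -- cast helper
  have natsum : ∀ f g : A → ℕ,
      (∑ e ∈ T.B, (f e : ℂ) * (g e : ℂ)) = ((∑ e ∈ T.B, f e * g e : ℕ) : ℂ) := by
    intro f g; push_cast; rfl
  have ipPar : ∀ p : A, ∀ f : A → ℕ, (∀ d ∈ T.B, T.ip p d = (f d : ℂ)) →
      T.ip p p = ((∑ e ∈ T.B, f e * f e : ℕ) : ℂ) := by
    intro p f hf
    rw [T.parseval p p, ← natsum f f]
    exact Finset.sum_congr rfl fun d hd => by rw [hf d hd]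
  have degPar : ∀ p : A, ∀ f : A → ℕ, (∀ d ∈ T.B, T.ip p d = (f d : ℂ)) →
      T.deg p = ((∑ e ∈ T.B, f e * D e : ℕ) : ℂ) := by
    intro p f hf
    rw [T.deg_sum p, ← natsum f D]
    exact Finset.sum_congr rfl fun d hd => by rw [hf d hd, (hD d hd).2]
  -- deg ∘ bar = deg on B
  have hbar_deg : ∀ b ∈ T.B, T.deg (T.bar b) = T.deg b := by
    intro b hb
    have key : ∀ e ∈ T.B, T.deg (T.bar b) * T.deg e
        = ∑ c0 ∈ T.B, T.ip (b * c0) e * T.deg c0 := by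
      intro e he
      rw [← map_mul, T.deg_sum (T.bar b * e)]
      refine Finset.sum_congr rfl fun c0 hc0 => ?_
      congr 1
      rw [T.ip_symm (T.bar b * e) c0, T.ip_assoc, T.bar_bar, mul_comm c0 b]
    set S : ℂ := ∑ e ∈ T.B, T.deg e * T.deg e with hS
    have hmain : T.deg (T.bar b) * S = T.deg b * S := by
      calc T.deg (T.bar b) * S = ∑ e ∈ T.B, (T.deg (T.bar b) * T.deg e) * T.deg e := by
            rw [hS, Finset.mul_sum]; exact Finset.sum_congr rfl fun e he => by ring
        _ = ∑ e ∈ T.B, (∑ c0 ∈ T.B, T.ip (b * c0) e * T.deg c0) * T.deg e := by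
            exact Finset.sum_congr rfl fun e he => by rw [key e he]
        _ = ∑ e ∈ T.B, ∑ c0 ∈ T.B, T.ip (b * c0) e * T.deg e * T.deg c0 := by
            exact Finset.sum_congr rfl fun e he => by
              rw [Finset.sum_mul]; exact Finset.sum_congr rfl fun c0 hc0 => by ring
        _ = ∑ c0 ∈ T.B, ∑ e ∈ T.B, T.ip (b * c0) e * T.deg e * T.deg c0 := by
            rw [Finset.sum_comm]
        _ = ∑ c0 ∈ T.B, T.deg (b * c0) * T.deg c0 := by
            refine Finset.sum_congr rfl fun c0 hc0 => ?_
            rw [T.deg_sum (b * c0), Finset.sum_mul]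
        _ = ∑ c0 ∈ T.B, T.deg b * (T.deg c0 * T.deg c0) := by
            exact Finset.sum_congr rfl fun c0 hc0 => by rw [map_mul]; ring
        _ = T.deg b * S := by rw [hS, ← Finset.mul_sum]
    have hSne : S ≠ 0 := by
      have h1 : S = ((∑ e ∈ T.B, D e * D e : ℕ) : ℂ) := by
        rw [hS, ← natsum D D]
        exact Finset.sum_congr rfl fun e he => by rw [(hD e he).2]
      have h2 : 1 ≤ ∑ e ∈ T.B, D e * D e := by
        have := Finset.single_le_sum (f := fun e => D e * D e)
          (fun e _ => Nat.zero_le _) h1B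
        have h3 := (hD 1 h1B).1
        nlinarith
      rw [h1]
      exact_mod_cast Nat.one_le_iff_ne_zero.mp h2
    exact mul_right_cancel₀ hSne hmain
  -- basic degrees
  have hD1 : D (1:A) = 1 := by
    have h := (hD 1 h1B).2; rw [map_one] at h; exact_mod_cast h.symm
  have hDb3 : D b3 = 3 := by
    have h := (hD b3 hb3).2; rw [hd3] at h; exact_mod_cast h.symm
  have hDb8 : D b8 = 8 := by
    have h := (hD b8 hb8).2; rw [hd8] at h; exact_mod_cast h.symm
  have hdbar3 : T.deg (T.bar b3) = 3 := by rw [hbar_deg b3 hb3, hd3]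
  have hDbar3 : D (T.bar b3) = 3 := by
    have h := (hD _ hb3b).2; rw [hdbar3] at h; exact_mod_cast h.symm
  -- distinctness
  have hne18 : (1:A) ≠ b8 := by
    intro h; have h2 := hd8; rw [← h, map_one] at h2; norm_num at h2
  have hne13 : b3 ≠ 1 := by
    intro h; rw [h, map_one] at hd3; norm_num at hd3
  have hne38 : b3 ≠ b8 := by
    intro h; rw [h, hd8] at hd3; norm_num at hd3
  have hnebar38 : T.bar b3 ≠ b8 := by
    intro h; rw [h, hd8] at hdbar3; norm_num at hdbar3
  have D_ge3 : ∀ e ∈ T.B, e ≠ 1 → 3 ≤ D e := by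
    intro e he hne
    have h1 := (hD e he).1
    have h2 := (hD e he).2
    by_contra hlt
    push_neg at hlt
    have : D e = 1 ∨ D e = 2 := by omega
    rcases this with h | h
    · exact hne (hL1 e he (by rw [h2, h]; norm_num))
    · exact hL2 e he (by rw [h2, h]; norm_num)
  have hpairB : ({1, b8} : Finset A) ⊆ T.B := by
    intro e he
    rcases Finset.mem_insert.mp he with h | h
    · rw [h]; exact h1B
    · rw [Finset.mem_singleton.mp h]; exact hb8
  -- coefficients of b3*b8
  obtain ⟨c, hc⟩ := coeffs b3 hb3 b8 hb8
  have hip_b3 : T.ip (b3 * b8) b3 = 1 := by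
    rw [T.ip_symm, T.ip_assoc, hmul, map_add, LinearMap.add_apply,
      T.ip_ne 1 h1B b8 hb8 hne18, T.ip_self b8 hb8]
    ring
  have hcb3 : c b3 = 1 := by
    have h := hc b3 hb3; rw [hip_b3] at h; exact_mod_cast h.symm
  have hip_one : T.ip (b3 * b8) 1 = 0 := by
    rw [T.ip_symm, T.ip_assoc, one_mul]
    exact T.ip_ne _ hb3b b8 hb8 hnebar38
  have hc1 : c 1 = 0 := by
    have h := hc 1 h1B; rw [hip_one] at h; exact_mod_cast h.symm
  -- the workhorse constraint
  have T1 : ∀ d ∈ T.B, 1 ≤ c d → d ≠ b3 →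
      4 ≤ D d ∧ (3 * D d = 8 * c d ∨ 8 * c d + 3 ≤ 3 * D d) := by
    intro d hdB hc1d hdne
    obtain ⟨f, hf⟩ := coeffs (T.bar b3) hb3b d hdB
    have hfb8 : f b8 = c d := by
      have e1 : T.ip (T.bar b3 * d) b8 = T.ip (b3 * b8) d := by
        rw [mul_comm (T.bar b3) d, ← T.ip_assoc, T.ip_symm]
      have h2 := hf b8 hb8
      rw [e1, hc d hdB] at h2
      exact_mod_cast h2.symm
    have hf1 : f 1 = 0 := by
      have e1 : T.ip (T.bar b3 * d) 1 = 0 := by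
        rw [T.ip_symm, T.ip_assoc, one_mul, T.bar_bar]
        exact T.ip_ne b3 hb3 d hdB (Ne.symm hdne)
      have h2 := hf 1 h1B; rw [e1] at h2; exact_mod_cast h2.symm
    have hdeg : ∑ e ∈ T.B, f e * D e = 3 * D d := by
      have h2 := degPar (T.bar b3 * d) f hf
      rw [map_mul, hdbar3, (hD d hdB).2] at h2
      exact_mod_cast h2.symm
    have hsdiff := Finset.sum_sdiff (f := fun e => f e * D e) hpairB
    have hpairsum : ∑ e ∈ ({1, b8} : Finset A), f e * D e = 8 * c d := by
      rw [Finset.sum_pair hne18, hf1, hD1, hfb8, hDb8]; ring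
    have hr03 : (∑ e ∈ T.B \ {1, b8}, f e * D e) = 0 ∨
        3 ≤ ∑ e ∈ T.B \ {1, b8}, f e * D e := by
      by_cases h0 : (∑ e ∈ T.B \ {1, b8}, f e * D e) = 0
      · exact Or.inl h0
      · right
        obtain ⟨e, he, hene⟩ := Finset.exists_ne_zero_of_sum_ne_zero h0
        have heB : e ∈ T.B := (Finset.mem_sdiff.mp he).1
        have he1 : e ≠ 1 := by
          intro h; exact (Finset.mem_sdiff.mp he).2 (by rw [h]; exact Finset.mem_insert_self _ _)
        have hfe : 1 ≤ f e := by
          rcases Nat.eq_zero_or_pos (f e) with h | h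
          · exact absurd (by rw [h, zero_mul]) hene
          · exact h
        have hDe := D_ge3 e heB he1
        calc (3:ℕ) = 1 * 3 := by ring
          _ ≤ f e * D e := Nat.mul_le_mul hfe hDe
          _ ≤ _ := Finset.single_le_sum (f := fun e => f e * D e) (fun _ _ => Nat.zero_le _) he
    have hdne1 : d ≠ 1 := by
      intro h; rw [h, hc1] at hc1d; omega
    have hDd3 := D_ge3 d hdB hdne1
    have hkey : (∑ e ∈ T.B \ ({1, b8} : Finset A), f e * D e) + 8 * c d = 3 * D d := by
      rw [← hpairsum, ← hdeg]; exact hsdiff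
    exact ⟨by omega, by omega⟩
  have T1' : ∀ d ∈ T.B, 2 ≤ c d → d ≠ b3 → 7 ≤ D d := by
    intro d hdB h2 hdne
    have hT := T1 d hdB (by omega) hdne
    omega
  -- b3 * b3
  obtain ⟨q, hq⟩ := coeffs b3 hb3 b3 hb3
  have halgQ : (b3 * b3) * T.bar b3 = b3 + b3 * b8 := by
    calc (b3 * b3) * T.bar b3 = b3 * (b3 * T.bar b3) := by ring
      _ = b3 * (1 + b8) := by rw [hmul]
      _ = b3 + b3 * b8 := by ring
  have hipQQ : T.ip (b3 * b3) (b3 * b3) = 2 := by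
    rw [T.ip_assoc, halgQ, map_add, LinearMap.add_apply, T.ip_self b3 hb3, hip_b3]
    norm_num
  have hqsum2 : ∑ e ∈ T.B, q e * q e = 2 := by
    have h2 := ipPar (b3 * b3) q hq; rw [hipQQ] at h2; exact_mod_cast h2.symm
  have hqdeg : ∑ e ∈ T.B, q e * D e = 9 := by
    have h2 := degPar (b3 * b3) q hq
    rw [map_mul, hd3] at h2
    have h3 : ((9:ℕ) : ℂ) = ((∑ e ∈ T.B, q e * D e : ℕ) : ℂ) := by
      rw [← h2]; norm_num
    exact_mod_cast h3.symm
  have hqb3 : q b3 = 0 := by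
    have e1 : T.ip (b3 * b3) b3 = 0 := by
      rw [T.ip_symm, T.ip_assoc, hmul, map_add, LinearMap.add_apply,
        T.ip_ne 1 h1B b3 hb3 (Ne.symm hne13), T.ip_ne b8 hb8 b3 hb3 (Ne.symm hne38)]
      ring
    have h := hq b3 hb3; rw [e1] at h; exact_mod_cast h.symm
  have hq1 : q 1 = 0 := by
    have e1 : T.ip (b3 * b3) 1 = 0 := by
      rw [T.ip_symm, T.ip_assoc, one_mul]
      exact T.ip_ne _ hb3b b3 hb3 hnr
    have h := hq 1 h1B; rw [e1] at h; exact_mod_cast h.symm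
  obtain ⟨x, hxB, y, hyB, hxy, hqx, hqy, hq0, hDxy⟩ :
      ∃ x ∈ T.B, ∃ y ∈ T.B, x ≠ y ∧ q x = 1 ∧ q y = 1 ∧
        (∀ d ∈ T.B, d ≠ x → d ≠ y → q d = 0) ∧ D x ≤ D y := by
    obtain ⟨x, hxB, y, hyB, hxy, hqx, hqy, hq0⟩ := sum_sq_two hqsum2
    rcases le_total (D x) (D y) with h | h
    · exact ⟨x, hxB, y, hyB, hxy, hqx, hqy, hq0, h⟩
    · exact ⟨y, hyB, x, hxB, hxy.symm, hqy, hqx, fun d hd h1 h2 => hq0 d hd h2 h1, h⟩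
  have hxne3 : x ≠ b3 := by intro h; rw [h, hqb3] at hqx; omega
  have hyne3 : y ≠ b3 := by intro h; rw [h, hqb3] at hqy; omega
  have hxne1 : x ≠ 1 := by intro h; rw [h, hq1] at hqx; omega
  have hyne1 : y ≠ 1 := by intro h; rw [h, hq1] at hqy; omega
  have hDxy9 : D x + D y = 9 := by
    have h := sum_ind2 hxB hyB hxy hqx hqy hq0 D
    omega
  have hDx3 := D_ge3 x hxB hxne1
  have hDy3 := D_ge3 y hyB hyne1
  have hQxy : b3 * b3 = x + y := by
    have h1 := T.expand (b3 * b3)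
    have hpair : ({x, y} : Finset A) ⊆ T.B := by
      intro e he
      rcases Finset.mem_insert.mp he with h | h
      · rw [h]; exact hxB
      · rw [Finset.mem_singleton.mp h]; exact hyB
    have h2 : ∑ d ∈ T.B, T.ip (b3 * b3) d • d
        = ∑ d ∈ ({x, y} : Finset A), T.ip (b3 * b3) d • d := by
      refine (Finset.sum_subset hpair ?_).symm
      intro e heB henot
      have he1 : e ≠ x := by
        intro h; exact henot (by rw [h]; exact Finset.mem_insert_self _ _)
      have he2 : e ≠ y := by
        intro h; exact henot (by rw [h]; exact Finset.mem_insert_of_mem (Finset.mem_singleton_self _))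
      rw [hq e heB, hq0 e heB he1 he2]
      norm_num
    rw [h2, Finset.sum_pair hxy, hq x hxB, hq y hyB, hqx, hqy] at h1
    simpa using h1
  -- R = x * bar b3
  obtain ⟨r, hrc⟩ := coeffs x hxB (T.bar b3) hb3b
  have hipRb3 : T.ip (x * T.bar b3) b3 = 1 := by
    rw [← T.ip_assoc, hQxy, map_add, T.ip_self x hxB, T.ip_ne x hxB y hyB hxy]
    ring
  have hrb3 : r b3 = 1 := by
    have h := hrc b3 hb3; rw [hipRb3] at h; exact_mod_cast h.symm
  have hbarxne : T.bar x ≠ T.bar b3 := by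
    intro h; exact hxne3 (by rw [← T.bar_bar x, h, T.bar_bar])
  have hipR1 : T.ip (x * T.bar b3) 1 = 0 := by
    rw [T.ip_symm, T.ip_assoc, one_mul]
    exact T.ip_ne _ (T.bar_mem x hxB) _ hb3b hbarxne
  have hr1 : r 1 = 0 := by
    have h := hrc 1 h1B; rw [hipR1] at h; exact_mod_cast h.symm
  have hrdeg : ∑ e ∈ T.B, r e * D e = D x * 3 := by
    have h2 := degPar (x * T.bar b3) r hrc
    rw [map_mul, (hD x hxB).2, hdbar3] at h2
    exact_mod_cast h2.symm
  -- X = x * bar x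
  obtain ⟨g, hg⟩ := coeffs x hxB (T.bar x) (T.bar_mem x hxB)
  have hipX1 : T.ip (x * T.bar x) 1 = 1 := by
    rw [T.ip_symm, T.ip_assoc, one_mul]
    exact T.ip_self _ (T.bar_mem x hxB)
  have hg1 : g 1 = 1 := by
    have h := hg 1 h1B; rw [hipX1] at h; exact_mod_cast h.symm
  have hipRR : T.ip (x * T.bar b3) (x * T.bar b3) = 1 + (g b8 : ℂ) := by
    rw [T.ip_assoc,
      show (x * T.bar b3) * T.bar x = (x * T.bar x) * T.bar b3 from by ring,
      ← T.ip_assoc, hmul, map_add, hipX1, hg b8 hb8]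
  have hrsum : ∑ e ∈ T.B, r e * r e = 1 + g b8 := by
    have h2 := ipPar _ r hrc; rw [hipRR] at h2; exact_mod_cast h2.symm
  have hgdeg : ∑ e ∈ T.B, g e * D e = D x * D x := by
    have h2 := degPar (x * T.bar x) g hg
    have hdbx : T.deg (T.bar x) = ((D x : ℕ) : ℂ) := by
      rw [hbar_deg x hxB]; exact (hD x hxB).2
    rw [map_mul, (hD x hxB).2, hdbx] at h2
    exact_mod_cast h2.symm
  have hDx4 : D x ≤ 4 := by omega
  have hgb8le : g b8 ≤ 1 := by
    have hle : ∑ e ∈ ({1, b8} : Finset A), g e * D e ≤ ∑ e ∈ T.B, g e * D e :=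
      Finset.sum_le_sum_of_subset hpairB
    rw [Finset.sum_pair hne18, hg1, hD1, hDb8, hgdeg] at hle
    have h16 : D x * D x ≤ 16 := Nat.mul_le_mul hDx4 hDx4
    omega
  -- u
  set u : A → ℕ := fun d => if d = b3 then 0 else r d with hu
  have hub3 : u b3 = 0 := by rw [hu]; simp
  have huoff : ∀ d, d ≠ b3 → u d = r d := by
    intro d hd; rw [hu]; simp [hd]
  have husum : ∑ e ∈ T.B, u e * u e = g b8 := by
    have h1 := Finset.add_sum_erase T.B (fun e => r e * r e) hb3
    have h2 := Finset.add_sum_erase T.B (fun e => u e * u e) hb3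
    have h3 : ∑ e ∈ T.B.erase b3, u e * u e = ∑ e ∈ T.B.erase b3, r e * r e :=
      Finset.sum_congr rfl fun e he => by rw [huoff e (Finset.mem_erase.mp he).1]
    simp only [hrb3, hub3] at h1 h2
    omega
  have hudeg : ∑ e ∈ T.B, u e * D e = D x * 3 - 3 := by
    have h1 := Finset.add_sum_erase T.B (fun e => r e * D e) hb3
    have h2 := Finset.add_sum_erase T.B (fun e => u e * D e) hb3
    have h3 : ∑ e ∈ T.B.erase b3, u e * D e = ∑ e ∈ T.B.erase b3, r e * D e :=
      Finset.sum_congr rfl fun e he => by rw [huoff e (Finset.mem_erase.mp he).1]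
    simp only [hrb3, hub3, hDb3] at h1 h2
    omega
  have hgb8_1 : g b8 = 1 := by
    rcases Nat.eq_zero_or_pos (g b8) with h0 | h1
    · exfalso
      have hz : ∑ e ∈ T.B, u e * u e = 0 := by rw [husum, h0]
      have hz2 : ∀ e ∈ T.B, u e = 0 := by
        intro e he
        have := (Finset.sum_eq_zero_iff).mp hz e he
        exact mul_self_eq_zero.mp this
      have : ∑ e ∈ T.B, u e * D e = 0 :=
        Finset.sum_eq_zero fun e he => by rw [hz2 e he, zero_mul]
      omega
    · omega
  have husum1 : ∑ e ∈ T.B, u e * u e = 1 := by rw [husum, hgb8_1]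
  obtain ⟨u0, hu0B, huu0, hu0rest⟩ := sum_sq_one husum1
  have hu0ne3 : u0 ≠ b3 := by intro h; rw [h, hub3] at huu0; omega
  have hDu0 : D u0 = D x * 3 - 3 := by
    have h := sum_ind1 hu0B huu0 hu0rest D
    omega
  -- S = y * bar b3
  obtain ⟨w, hwc⟩ := coeffs y hyB (T.bar b3) hb3b
  have hipSb3 : T.ip (y * T.bar b3) b3 = 1 := by
    rw [← T.ip_assoc, hQxy, map_add, T.ip_self y hyB, T.ip_ne y hyB x hxB hxy.symm]
    ring
  have hwb3 : w b3 = 1 := by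
    have h := hwc b3 hb3; rw [hipSb3] at h; exact_mod_cast h.symm
  have hbaryne : T.bar y ≠ T.bar b3 := by
    intro h; exact hyne3 (by rw [← T.bar_bar y, h, T.bar_bar])
  have hipS1 : T.ip (y * T.bar b3) 1 = 0 := by
    rw [T.ip_symm, T.ip_assoc, one_mul]
    exact T.ip_ne _ (T.bar_mem y hyB) _ hb3b hbaryne
  have hw1 : w 1 = 0 := by
    have h := hwc 1 h1B; rw [hipS1] at h; exact_mod_cast h.symm
  have hwdeg : ∑ e ∈ T.B, w e * D e = D y * 3 := by
    have h2 := degPar (y * T.bar b3) w hwc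
    rw [map_mul, (hD y hyB).2, hdbar3] at h2
    exact_mod_cast h2.symm
  set v : A → ℕ := fun d => if d = b3 then 0 else w d with hv
  have hvb3 : v b3 = 0 := by rw [hv]; simp
  have hvoff : ∀ d, d ≠ b3 → v d = w d := by
    intro d hd; rw [hv]; simp [hd]
  have hvdeg : ∑ e ∈ T.B, v e * D e = D y * 3 - 3 := by
    have h1 := Finset.add_sum_erase T.B (fun e => w e * D e) hb3
    have h2 := Finset.add_sum_erase T.B (fun e => v e * D e) hb3
    have h3 : ∑ e ∈ T.B.erase b3, v e * D e = ∑ e ∈ T.B.erase b3, w e * D e :=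
      Finset.sum_congr rfl fun e he => by rw [hvoff e (Finset.mem_erase.mp he).1]
    simp only [hwb3, hvb3, hDb3] at h1 h2
    omega
  -- key coefficient identity
  have halg : x * T.bar b3 + y * T.bar b3 = b3 + b3 * b8 := by
    calc x * T.bar b3 + y * T.bar b3 = (b3 * b3) * T.bar b3 := by rw [hQxy]; ring
      _ = b3 + b3 * b8 := halgQ
  have hcuv : ∀ d ∈ T.B, d ≠ b3 → c d = r d + w d := by
    intro d hdB hdne
    have h1 : T.ip (x * T.bar b3) d + T.ip (y * T.bar b3) d
        = T.ip b3 d + T.ip (b3 * b8) d := by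
      rw [← LinearMap.add_apply, ← map_add, halg, map_add, LinearMap.add_apply]
    rw [hrc d hdB, hwc d hdB, hc d hdB, T.ip_ne b3 hb3 d hdB (Ne.symm hdne)] at h1
    have h2 : ((r d + w d : ℕ) : ℂ) = ((c d : ℕ) : ℂ) := by push_cast; rw [h1]; ring
    exact_mod_cast h2.symm
  have hru0 : r u0 = 1 := by rw [← huoff u0 hu0ne3]; exact huu0
  have hcu0 : c u0 = 1 + v u0 := by
    have h1 := hcuv u0 hu0B hu0ne3
    have h2 := hvoff u0 hu0ne3
    omega
  -- m = 0
  have hDx34 : D x = 3 ∨ D x = 4 := by omega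
  have hm0 : v u0 = 0 := by
    rcases hDx34 with h3 | h4
    · have hD6 : D u0 = 6 := by omega
      have hT := T1 u0 hu0B (by omega) hu0ne3
      omega
    · have hD9 : D u0 = 9 := by omega
      have hDy5 : D y = 5 := by omega
      have hV : ∑ e ∈ T.B, v e * D e = 12 := by omega
      by_contra hm
      have hm1 : 1 ≤ v u0 := by omega
      have hsplit : v u0 * D u0 + ∑ e ∈ T.B.erase u0, v e * D e
          = ∑ e ∈ T.B, v e * D e := Finset.add_sum_erase T.B (fun e => v e * D e) hu0B
      rw [hD9, hV] at hsplit
      have hrest : ∀ e ∈ T.B.erase u0, v e * D e = 0 := by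
        intro e he
        by_contra hne0
        have heB := (Finset.mem_erase.mp he).2
        have hve : 1 ≤ v e := by
          rcases Nat.eq_zero_or_pos (v e) with h | h
          · exact absurd (by rw [h, zero_mul]) hne0
          · exact h
        have hene3 : e ≠ b3 := by intro h; rw [h, hvb3] at hve; omega
        have hce : 1 ≤ c e := by
          have hh := hcuv e heB hene3
          have hh2 := hvoff e hene3
          omega
        have hT := T1 e heB hce hene3
        have h4le : 4 ≤ v e * D e := by
          calc (4:ℕ) = 1 * 4 := by ring
            _ ≤ v e * D e := Nat.mul_le_mul hve hT.1
        have hle2 : v e * D e ≤ ∑ e ∈ T.B.erase u0, v e * D e :=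
          Finset.single_le_sum (f := fun e => v e * D e) (fun _ _ => Nat.zero_le _) he
        omega
      have hzero : ∑ e ∈ T.B.erase u0, v e * D e = 0 := Finset.sum_eq_zero hrest
      omega
  -- sum of squares of v is at most 3
  have hVle : ∑ e ∈ T.B, v e * D e ≤ 15 := by omega
  have hvv3 : ∑ e ∈ T.B, v e * v e ≤ 3 := by
    by_cases hall : ∀ e ∈ T.B, v e ≤ 1
    · have h4 : ∀ e ∈ T.B, 4 * (v e * v e) ≤ v e * D e := by
        intro e he
        rcases Nat.eq_zero_or_pos (v e) with h0 | h1
        · simp [h0]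
        · have hve1 : v e = 1 := le_antisymm (hall e he) h1
          have hene3 : e ≠ b3 := by intro h; rw [h, hvb3] at h1; omega
          have hce : 1 ≤ c e := by
            have hh := hcuv e he hene3
            have hh2 := hvoff e hene3
            omega
          have hT := T1 e he hce hene3
          rw [hve1]
          omega
      have h5 : 4 * ∑ e ∈ T.B, v e * v e ≤ 15 := by
        calc 4 * ∑ e ∈ T.B, v e * v e = ∑ e ∈ T.B, 4 * (v e * v e) := by
              rw [Finset.mul_sum]
          _ ≤ ∑ e ∈ T.B, v e * D e := Finset.sum_le_sum h4
          _ ≤ 15 := hVle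
      omega
    · push_neg at hall
      obtain ⟨f0, hf0B, hf0⟩ := hall
      have hvf0 : 2 ≤ v f0 := by omega
      have hf0ne3 : f0 ≠ b3 := by intro h; rw [h, hvb3] at hvf0; omega
      have hcf0 : 2 ≤ c f0 := by
        have hh := hcuv f0 hf0B hf0ne3
        have hh2 := hvoff f0 hf0ne3
        omega
      have hDf0 : 7 ≤ D f0 := T1' f0 hf0B hcf0 hf0ne3
      have hsplit : v f0 * D f0 + ∑ e ∈ T.B.erase f0, v e * D e
          = ∑ e ∈ T.B, v e * D e := Finset.add_sum_erase T.B (fun e => v e * D e) hf0B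
      have hprod14 : 14 ≤ v f0 * D f0 := by
        calc (14:ℕ) = 2 * 7 := by ring
          _ ≤ v f0 * D f0 := Nat.mul_le_mul hvf0 hDf0
      have hrest0 : ∀ e ∈ T.B.erase f0, v e * D e = 0 := by
        intro e he
        by_contra hne0
        have heB := (Finset.mem_erase.mp he).2
        have hve : 1 ≤ v e := by
          rcases Nat.eq_zero_or_pos (v e) with h | h
          · exact absurd (by rw [h, zero_mul]) hne0
          · exact h
        have hene3 : e ≠ b3 := by intro h; rw [h, hvb3] at hve; omega
        have hce : 1 ≤ c e := by
          have hh := hcuv e heB hene3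
          have hh2 := hvoff e hene3
          omega
        have hT := T1 e heB hce hene3
        have h4le : 4 ≤ v e * D e := by
          calc (4:ℕ) = 1 * 4 := by ring
            _ ≤ v e * D e := Nat.mul_le_mul hve hT.1
        have hle2 : v e * D e ≤ ∑ e ∈ T.B.erase f0, v e * D e :=
          Finset.single_le_sum (f := fun e => v e * D e) (fun _ _ => Nat.zero_le _) he
        omega
      have hzero : ∑ e ∈ T.B.erase f0, v e * D e = 0 := Finset.sum_eq_zero hrest0
      exfalso
      have heq : v f0 * D f0 = D y * 3 - 3 := by omega
      have h2D : 2 * D f0 ≤ v f0 * D f0 := Nat.mul_le_mul_right _ hvf0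
      have hDf7 : D f0 = 7 := by omega
      rw [hDf7] at heq
      omega
  -- final assembly
  obtain ⟨k, hk, hk4⟩ := hip
  have hcsum : ∑ e ∈ T.B, c e * c e = k := by
    have h2 := ipPar (b3 * b8) c hc; rw [hk] at h2; exact_mod_cast h2.symm
  have hcc : ∑ e ∈ T.B, c e * c e = 2 + ∑ e ∈ T.B, v e * v e := by
    have hu0mem : u0 ∈ T.B.erase b3 := Finset.mem_erase.mpr ⟨hu0ne3, hu0B⟩
    have h1 : c b3 * c b3 + ∑ e ∈ T.B.erase b3, c e * c e = ∑ e ∈ T.B, c e * c e :=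
      Finset.add_sum_erase T.B (fun e => c e * c e) hb3
    have h2 : c u0 * c u0 + ∑ e ∈ (T.B.erase b3).erase u0, c e * c e
        = ∑ e ∈ T.B.erase b3, c e * c e := Finset.add_sum_erase _ (fun e => c e * c e) hu0mem
    have h1v : v b3 * v b3 + ∑ e ∈ T.B.erase b3, v e * v e = ∑ e ∈ T.B, v e * v e :=
      Finset.add_sum_erase T.B (fun e => v e * v e) hb3
    have h2v : v u0 * v u0 + ∑ e ∈ (T.B.erase b3).erase u0, v e * v e
        = ∑ e ∈ T.B.erase b3, v e * v e := Finset.add_sum_erase _ (fun e => v e * v e) hu0mem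
    have h3 : ∑ e ∈ (T.B.erase b3).erase u0, c e * c e
        = ∑ e ∈ (T.B.erase b3).erase u0, v e * v e := by
      refine Finset.sum_congr rfl fun e he => ?_
      have he1 := Finset.mem_erase.mp he
      have he2 := Finset.mem_erase.mp he1.2
      have hcr : c e = r e + w e := hcuv e he2.2 he2.1
      have hre : u e = r e := huoff e he2.1
      have hue : u e = 0 := hu0rest e he2.2 he1.1
      have hwe : v e = w e := hvoff e he2.1
      have : c e = v e := by omega
      rw [this]
    simp only [hcb3, hvb3, hcu0, hm0] at h1 h2 h1v h2v
    omega
  constructor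
  · intro d hdB hne0 hdne
    have hcd : 1 ≤ c d := by
      rcases Nat.eq_zero_or_pos (c d) with h0 | h1
      · exfalso
        have hh := hc d hdB
        rw [h0] at hh
        simp at hh
        exact hne0 hh
      · exact h1
    have hT := T1 d hdB hcd hdne
    exact ⟨D d, (hD d hdB).2, by omega⟩
  · rw [hk]
    have hk45 : k = 4 ∨ k = 5 := by omega
    rcases hk45 with h | h
    · left; rw [h]; norm_num
    · right; rw [h]; norm_num
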